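/- If u ∈ H¹(0,1) with u(0)=0, and a : [0,1] → ℝ is continuous with a(0)=0, a>0 on (0,1], and x ↦ x^{K₁}/a(x) is nondecreasing near 0 for some K₁ ∈ (0,2), then lim_{x→0⁺} x u(x)²/a(x) = 0. -/

import Mathlib

open Set MeasureTheory Filter

/-- if `u ∈ H¹(0,1)` with `u 0 = 0`, and `a` is continuous with
`a 0 = 0`, `a > 0` on `(0,1]`, and `x ↦ x^K₁ / a x` nondecreasing near `0`
for some `K₁ ∈ (0,2)`, then `lim_{x→0⁺} x * u(x)² / a(x) = 0`. -/
theorem statement5 (a u u' : ℝ → ℝ) (K₁ : ℝ)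
    (ha_cont : ContinuousOn a (Icc 0 1))
    (ha0 : a 0 = 0)
    (ha_pos : ∀ x ∈ Ioc (0:ℝ) 1, 0 < a x)
    (hK₁ : K₁ ∈ Ioo (0:ℝ) 2)
    (hmona : ∃ δ > 0, MonotoneOn (fun x : ℝ => x ^ K₁ / a x) (Ioo (0:ℝ) δ))
    (hu : ∀ x ∈ Ioo (0:ℝ) 1, HasDerivAt u (u' x) x)
    (hu_cont : ContinuousOn u (Icc 0 1))
    (hu0 : u 0 = 0)
    (hu' : IntegrableOn (fun x => u' x ^ 2) (Ioo 0 1)) :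
    Tendsto (fun x : ℝ => x * u x ^ 2 / a x) (nhdsWithin 0 (Ioi 0)) (nhds 0) := by
  obtain ⟨δ, hδ, hmono⟩ := hmona
  obtain ⟨hK₁0, hK₁2⟩ := hK₁
  -- measurability and integrability of u'
  have hmeas : AEStronglyMeasurable u' (volume.restrict (Ioo (0:ℝ) 1)) := by
    have h : ∀ᵐ t ∂(volume.restrict (Ioo (0:ℝ) 1)), deriv u t = u' t := by
      filter_upwards [ae_restrict_mem measurableSet_Ioo] with t ht
      exact (hu t ht).deriv
    exact ((measurable_deriv u).aestronglyMeasurable).congr h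
  have hint : IntegrableOn u' (Ioo 0 1) := by
    refine Integrable.mono' ((hu'.add (integrable_const 1)).div_const 2) hmeas ?_
    filter_upwards with t
    simp only [Pi.add_apply, Real.norm_eq_abs]
    nlinarith [sq_nonneg (|u' t| - 1), sq_abs (u' t), abs_nonneg (u' t)]
  set M := ∫ t in Ioo (0:ℝ) 1, u' t ^ 2 with hM
  have hM0 : 0 ≤ M := setIntegral_nonneg measurableSet_Ioo fun t _ => sq_nonneg _
  -- key pointwise bound
  have key : ∀ x ∈ Ioo (0:ℝ) 1, u x ^ 2 ≤ x * ((M + 1) ^ 2 / 4) := by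
    intro x hx
    obtain ⟨hx0, hx1⟩ := hx
    have hsub : Ioc (0:ℝ) x ⊆ Ioo (0:ℝ) 1 := fun t ht => ⟨ht.1, lt_of_le_of_lt ht.2 hx1⟩
    have hii : IntervalIntegrable u' volume 0 x := by
      rw [intervalIntegrable_iff_integrableOn_Ioc_of_le hx0.le]
      exact hint.mono_set hsub
    have hftc : ∫ t in (0:ℝ)..x, u' t = u x - u 0 :=
      intervalIntegral.integral_eq_sub_of_hasDeriv_right_of_le hx0.le
        (hu_cont.mono (Icc_subset_Icc le_rfl hx1.le))
        (fun t ht => (hu t ⟨ht.1, ht.2.trans hx1⟩).hasDerivWithinAt) hii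
    have hux : u x = ∫ t in Ioc (0:ℝ) x, u' t := by
      rw [← intervalIntegral.integral_of_le hx0.le, hftc, hu0, sub_zero]
    set s := Real.sqrt x with hs
    have hs0 : 0 < s := Real.sqrt_pos.mpr hx0
    have hss : s * s = x := Real.mul_self_sqrt hx0.le
    have hI2 : IntegrableOn (fun t => u' t ^ 2) (Ioc 0 x) := hu'.mono_set hsub
    have hIg : IntegrableOn (fun t => (s * u' t ^ 2 + 1 / s) / 2) (Ioc 0 x) := by
      exact (((hI2.const_mul s).add (integrable_const _)).div_const 2)
    have habs : |u x| ≤ (s * (∫ t in Ioc (0:ℝ) x, u' t ^ 2) + x * (1 / s)) / 2 := by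
      rw [hux]
      calc |∫ t in Ioc (0:ℝ) x, u' t| ≤ ∫ t in Ioc (0:ℝ) x, |u' t| := by
            simpa [Real.norm_eq_abs] using
              norm_integral_le_integral_norm (μ := volume.restrict (Ioc (0:ℝ) x)) u'
        _ ≤ ∫ t in Ioc (0:ℝ) x, (s * u' t ^ 2 + 1 / s) / 2 := by
            refine setIntegral_mono_on (hint.mono_set hsub).abs hIg measurableSet_Ioc ?_
            intro t _
            have heq : (s * u' t ^ 2 + 1 / s) / 2 = (s * s * u' t ^ 2 + 1) / (2 * s) := by
              field_simp
            rw [heq, le_div_iff₀ (by positivity)]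
            nlinarith [sq_nonneg (s * |u' t| - 1), sq_abs (u' t)]
        _ = (s * (∫ t in Ioc (0:ℝ) x, u' t ^ 2) + x * (1 / s)) / 2 := by
            rw [integral_div, integral_add (hI2.const_mul s) (integrable_const _),
              integral_const_mul, setIntegral_const]
            simp [Real.volume_Ioc, ENNReal.toReal_ofReal hx0.le, smul_eq_mul, hx0.le]
    have hIoc_le : (∫ t in Ioc (0:ℝ) x, u' t ^ 2) ≤ M := by
      refine setIntegral_mono_set hu' ?_ (HasSubset.Subset.eventuallyLE hsub)
      filter_upwards with t using sq_nonneg _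
    have habs2 : |u x| ≤ s * (M + 1) / 2 := by
      have hx_s : x * (1 / s) = s := by
        rw [mul_one_div, div_eq_iff hs0.ne']; exact hss.symm
      calc |u x| ≤ (s * (∫ t in Ioc (0:ℝ) x, u' t ^ 2) + x * (1 / s)) / 2 := habs
        _ ≤ (s * M + s) / 2 := by
            have := mul_le_mul_of_nonneg_left hIoc_le hs0.le
            rw [hx_s]; linarith
        _ = s * (M + 1) / 2 := by ring
    have : u x ^ 2 ≤ (s * (M + 1) / 2) ^ 2 := by
      rw [← sq_abs]
      exact pow_le_pow_left₀ (abs_nonneg _) habs2 2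
    calc u x ^ 2 ≤ (s * (M + 1) / 2) ^ 2 := this
      _ = x * ((M + 1) ^ 2 / 4) := by rw [div_pow, mul_pow, sq, hss]; ring
  -- choose comparison point
  set y := min δ 1 / 2 with hy
  have hy0 : 0 < y := by positivity
  have hyδ : y < δ := by
    have : min δ 1 ≤ δ := min_le_left _ _
    simp only [hy]; linarith
  have hy1 : y < 1 := by
    have : min δ 1 ≤ 1 := min_le_right _ _
    simp only [hy]; linarith
  set C := y ^ K₁ / a y with hC
  -- upper bound
  have hupper : ∀ x ∈ Ioo (0:ℝ) y, x * u x ^ 2 / a x ≤ C * ((M + 1) ^ 2 / 4) * x ^ (2 - K₁) := by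
    intro x hx
    obtain ⟨hx0, hxy⟩ := hx
    have hx1 : x < 1 := hxy.trans hy1
    have hax : 0 < a x := ha_pos x ⟨hx0, hx1.le⟩
    have hmle : x ^ K₁ / a x ≤ C := hmono ⟨hx0, hxy.trans hyδ⟩ ⟨hy0, hyδ⟩ hxy.le
    have hxsplit : x * x = x ^ K₁ * x ^ (2 - K₁) := by
      rw [← Real.rpow_add hx0, show K₁ + (2 - K₁) = ((2:ℕ):ℝ) by push_cast; ring,
        Real.rpow_natCast]
      ring
    calc x * u x ^ 2 / a x ≤ x * (x * ((M + 1) ^ 2 / 4)) / a x := by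
          gcongr
          exact key x ⟨hx0, hx1⟩
      _ = (x * x) * ((M + 1) ^ 2 / 4) / a x := by ring
      _ = (x ^ K₁ * x ^ (2 - K₁)) * ((M + 1) ^ 2 / 4) / a x := by rw [← hxsplit]
      _ = (x ^ K₁ / a x) * (x ^ (2 - K₁) * ((M + 1) ^ 2 / 4)) := by ring
      _ ≤ C * (x ^ (2 - K₁) * ((M + 1) ^ 2 / 4)) := by
          refine mul_le_mul_of_nonneg_right hmle ?_
          have := Real.rpow_nonneg hx0.le (2 - K₁)
          positivity
      _ = C * ((M + 1) ^ 2 / 4) * x ^ (2 - K₁) := by ring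
  -- squeeze
  have hIoo : Ioo (0:ℝ) y ∈ nhdsWithin (0:ℝ) (Ioi 0) :=
    Ioo_mem_nhdsGT_of_mem ⟨le_refl 0, hy0⟩
  have hlim : Tendsto (fun x : ℝ => C * ((M + 1) ^ 2 / 4) * x ^ (2 - K₁))
      (nhdsWithin 0 (Ioi 0)) (nhds 0) := by
    have h1 : Tendsto (fun x : ℝ => x ^ (2 - K₁)) (nhds 0) (nhds 0) := by
      have := (Real.continuousAt_rpow_const 0 (2 - K₁) (Or.inr (by linarith))).tendsto
      rwa [Real.zero_rpow (by intro h; linarith [h] : 2 - K₁ ≠ 0)] at this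
    have h2 : Tendsto (fun x : ℝ => x ^ (2 - K₁)) (nhdsWithin 0 (Ioi 0)) (nhds 0) :=
      h1.mono_left nhdsWithin_le_nhds
    simpa using h2.const_mul (C * ((M + 1) ^ 2 / 4))
  refine squeeze_zero' ?_ ?_ hlim
  · filter_upwards [hIoo] with x hx
    exact div_nonneg (mul_nonneg hx.1.le (sq_nonneg _)) (ha_pos x ⟨hx.1, (hx.2.trans hy1).le⟩).le
  · filter_upwards [hIoo] with x hx
    exact hupper x hx
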